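/- Let a₁, a₂, a₃ ∈ (0,1) and let A₁ = [[0, 1, a₃], [a₁, 0, 1], [1, a₂, 0]]. Then the symmetric game with payoff matrix A₁ has exactly one symmetric Nash equilibrium x in the standard simplex of ℝ³, and this x has all three coordinates strictly positive. -/

import Mathlib

/-- `x` is a symmetric Nash equilibrium of the symmetric game with payoff matrix `A`:
`x` lies in the standard simplex of `ℝ³` and `xᵀAx ≥ yᵀAx` for all `y` in the simplex. -/
def IsSymNash (A : Matrix (Fin 3) (Fin 3) ℝ) (x : Fin 3 → ℝ) : Prop :=
  (∀ j, 0 ≤ x j) ∧ (∑ j, x j = 1) ∧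
    ∀ y : Fin 3 → ℝ, (∀ j, 0 ≤ y j) → (∑ j, y j = 1) →
      dotProduct y (A.mulVec x) ≤ dotProduct x (A.mulVec x)

set_option maxHeartbeats 1600000 in
/-- The symmetric game with the given payoff matrix has exactly one symmetric Nash
equilibrium, and it is completely mixed. -/
theorem classA1_unique_completely_mixed (a₁ a₂ a₃ : ℝ)
    (h₁ : a₁ ∈ Set.Ioo (0:ℝ) 1) (h₂ : a₂ ∈ Set.Ioo (0:ℝ) 1) (h₃ : a₃ ∈ Set.Ioo (0:ℝ) 1) :
    ∃ x : Fin 3 → ℝ, IsSymNash !![0, 1, a₃; a₁, 0, 1; 1, a₂, 0] x ∧ (∀ j, 0 < x j) ∧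
      ∀ y : Fin 3 → ℝ, IsSymNash !![0, 1, a₃; a₁, 0, 1; 1, a₂, 0] y → y = x := by
  obtain ⟨ha1, hb1⟩ := h₁
  obtain ⟨ha2, hb2⟩ := h₂
  obtain ⟨ha3, hb3⟩ := h₃
  have hD : (0:ℝ) < 3 - a₁ - a₂ - a₃ + a₁*a₂ + a₂*a₃ + a₃*a₁ := by nlinarith
  have hn1 : (0:ℝ) < 1 - a₂ + a₂*a₃ := by nlinarith
  have hn2 : (0:ℝ) < 1 - a₃ + a₃*a₁ := by nlinarith
  have hn3 : (0:ℝ) < 1 - a₁ + a₁*a₂ := by nlinarith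
  set D : ℝ := 3 - a₁ - a₂ - a₃ + a₁*a₂ + a₂*a₃ + a₃*a₁ with hDdef
  set x : Fin 3 → ℝ := ![(1 - a₂ + a₂*a₃)/D, (1 - a₃ + a₃*a₁)/D, (1 - a₁ + a₁*a₂)/D] with hxdef
  clear_value D x
  have hAx : Matrix.mulVec !![0, 1, a₃; a₁, 0, 1; 1, a₂, 0] x
      = fun _ => (1 + a₁*a₂*a₃)/D := by
    funext j
    fin_cases j <;>
      simp [hxdef, Matrix.mulVec, dotProduct, Fin.sum_univ_three] <;>
      · field_simp
        ring
  refine ⟨x, ⟨?_, ?_, ?_⟩, ?_, ?_⟩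
  · intro j
    fin_cases j
    · simpa [hxdef] using (div_pos hn1 hD).le
    · simpa [hxdef] using (div_pos hn2 hD).le
    · simpa [hxdef] using (div_pos hn3 hD).le
  · rw [Fin.sum_univ_three]
    simp only [hxdef, Matrix.cons_val_zero, Matrix.cons_val_one, Matrix.head_cons,
      Matrix.cons_val_two, Matrix.tail_cons]
    field_simp
    rw [hDdef]
    ring
  · intro y hy0 hy1
    rw [hAx]
    rw [Fin.sum_univ_three] at hy1
    have hxs : x 0 + x 1 + x 2 = 1 := by
      simp only [hxdef, Matrix.cons_val_zero, Matrix.cons_val_one, Matrix.head_cons,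
        Matrix.cons_val_two, Matrix.tail_cons]
      field_simp
      rw [hDdef]
      ring
    simp only [dotProduct, Fin.sum_univ_three]
    have : ∀ z : Fin 3 → ℝ, z 0 + z 1 + z 2 = 1 →
        z 0 * ((1 + a₁*a₂*a₃)/D) + z 1 * ((1 + a₁*a₂*a₃)/D) + z 2 * ((1 + a₁*a₂*a₃)/D)
          = (1 + a₁*a₂*a₃)/D := by
      intro z hz
      rw [← add_mul, ← add_mul, hz, one_mul]
    rw [this y hy1, this x hxs]
  · intro j
    fin_cases j
    · simpa [hxdef] using div_pos hn1 hD
    · simpa [hxdef] using div_pos hn2 hD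
    · simpa [hxdef] using div_pos hn3 hD
  · rintro y ⟨hy0, hy1, hyN⟩
    rw [Fin.sum_univ_three] at hy1
    have hby : Matrix.mulVec !![0, 1, a₃; a₁, 0, 1; 1, a₂, 0] y
        = ![y 1 + a₃ * y 2, a₁ * y 0 + y 2, y 0 + a₂ * y 1] := by
      funext j
      fin_cases j <;> simp [Matrix.mulVec, dotProduct, Fin.sum_univ_three] <;> ring
    have hV : dotProduct y (Matrix.mulVec !![0, 1, a₃; a₁, 0, 1; 1, a₂, 0] y)
        = y 0 * (y 1 + a₃ * y 2) + y 1 * (a₁ * y 0 + y 2) + y 2 * (y 0 + a₂ * y 1) := by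
      rw [hby]
      simp [dotProduct, Fin.sum_univ_three]
    set V : ℝ := y 0 * (y 1 + a₃ * y 2) + y 1 * (a₁ * y 0 + y 2) + y 2 * (y 0 + a₂ * y 1)
      with hVdef
    clear_value V
    have i0 : y 1 + a₃ * y 2 ≤ V := by
      have := hyN ![1,0,0] (by intro j; fin_cases j <;> norm_num)
        (by simp [Fin.sum_univ_three])
      rw [hby] at this
      rw [hVdef]
      simp only [dotProduct, Fin.sum_univ_three, Matrix.cons_val_zero,
        Matrix.cons_val_one, Matrix.head_cons, Matrix.cons_val_two, Matrix.tail_cons] at this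
      nlinarith [this]
    have i1 : a₁ * y 0 + y 2 ≤ V := by
      have := hyN ![0,1,0] (by intro j; fin_cases j <;> norm_num)
        (by simp [Fin.sum_univ_three])
      rw [hby] at this
      rw [hVdef]
      simp only [dotProduct, Fin.sum_univ_three, Matrix.cons_val_zero,
        Matrix.cons_val_one, Matrix.head_cons, Matrix.cons_val_two, Matrix.tail_cons] at this
      nlinarith [this]
    have i2 : y 0 + a₂ * y 1 ≤ V := by
      have := hyN ![0,0,1] (by intro j; fin_cases j <;> norm_num)
        (by simp [Fin.sum_univ_three])
      rw [hby] at this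
      rw [hVdef]
      simp only [dotProduct, Fin.sum_univ_three, Matrix.cons_val_zero,
        Matrix.cons_val_one, Matrix.head_cons, Matrix.cons_val_two, Matrix.tail_cons] at this
      nlinarith [this]
    have hy00 := hy0 0
    have hy01 := hy0 1
    have hy02 := hy0 2
    -- all coordinates positive
    have hp0 : 0 < y 0 := by
      rcases hy00.eq_or_lt with h | h
      · exfalso
        have hz : y 0 = 0 := h.symm
        rw [hVdef] at i0 i1 i2
        simp only [hz, zero_mul, mul_zero, add_zero, zero_add] at i0 i1 i2 hy1
        rcases hy02.eq_or_lt with h2 | h2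
        · have hz2 : y 2 = 0 := h2.symm
          simp only [hz2, zero_mul, mul_zero, add_zero, zero_add] at i0 hy1
          linarith
        · have h1 : 1 ≤ (1 + a₂) * y 1 := by
            by_contra hc
            push_neg at hc
            nlinarith [mul_pos h2 (sub_pos.2 hc)]
          have ha2s : a₂ * (y 1 + y 2) = a₂ := by rw [hy1, mul_one]
          have h2' : (1 + a₂) * y 2 ≤ a₂ := by nlinarith [h1, ha2s]
          nlinarith [mul_le_mul_of_nonneg_left h2' hy01, mul_pos ha3 h2,
            mul_nonneg (sub_nonneg.2 hb2.le) hy01]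
      · exact h
    have hp1 : 0 < y 1 := by
      rcases hy01.eq_or_lt with h | h
      · exfalso
        have hz : y 1 = 0 := h.symm
        rw [hVdef] at i0 i1 i2
        simp only [hz, zero_mul, mul_zero, add_zero, zero_add] at i0 i1 i2 hy1
        rcases hy00.eq_or_lt with h0 | h0
        · have hz0 : y 0 = 0 := h0.symm
          simp only [hz0, zero_mul, mul_zero, add_zero, zero_add] at i1 hy1
          linarith
        · have h1 : 1 ≤ (1 + a₃) * y 2 := by
            by_contra hc
            push_neg at hc
            nlinarith [mul_pos h0 (sub_pos.2 hc)]
          have ha3s : a₃ * (y 0 + y 2) = a₃ := by rw [hy1, mul_one]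
          have h2' : (1 + a₃) * y 0 ≤ a₃ := by nlinarith [h1, ha3s]
          nlinarith [mul_le_mul_of_nonneg_left h2' hy02, mul_pos ha1 h0,
            mul_nonneg (sub_nonneg.2 hb3.le) hy02]
      · exact h
    have hp2 : 0 < y 2 := by
      rcases hy02.eq_or_lt with h | h
      · exfalso
        have hz : y 2 = 0 := h.symm
        rw [hVdef] at i0 i1 i2
        simp only [hz, zero_mul, mul_zero, add_zero, zero_add] at i0 i1 i2 hy1
        rcases hy01.eq_or_lt with h1 | h1
        · have hz1 : y 1 = 0 := h1.symm
          simp only [hz1, zero_mul, mul_zero, add_zero, zero_add] at i2 hy1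
          linarith
        · have hh : 1 ≤ (1 + a₁) * y 0 := by
            by_contra hc
            push_neg at hc
            nlinarith [mul_pos h1 (sub_pos.2 hc)]
          have ha1s : a₁ * (y 0 + y 1) = a₁ := by rw [hy1, mul_one]
          have h2' : (1 + a₁) * y 1 ≤ a₁ := by nlinarith [hh, ha1s]
          nlinarith [mul_le_mul_of_nonneg_left h2' hy00, mul_pos ha2 h1,
            mul_nonneg (sub_nonneg.2 hb1.le) hy00]
      · exact h
    -- equal payoffs on the support
    have hsV : y 0 * V + y 1 * V + y 2 * V = V := by
      rw [← add_mul, ← add_mul, hy1, one_mul]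
    have e0 : y 1 + a₃ * y 2 = V := by
      rcases i0.eq_or_lt with h | h
      · exact h
      · exfalso
        nlinarith [mul_nonneg hy01 (sub_nonneg.2 i1), mul_nonneg hy02 (sub_nonneg.2 i2),
          mul_pos hp0 (sub_pos.2 h), hsV]
    have e1 : a₁ * y 0 + y 2 = V := by
      rcases i1.eq_or_lt with h | h
      · exact h
      · exfalso
        nlinarith [mul_nonneg hy00 (sub_nonneg.2 i0), mul_nonneg hy02 (sub_nonneg.2 i2),
          mul_pos hp1 (sub_pos.2 h), hsV]
    have e2 : y 0 + a₂ * y 1 = V := by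
      rcases i2.eq_or_lt with h | h
      · exact h
      · exfalso
        nlinarith [mul_nonneg hy00 (sub_nonneg.2 i0), mul_nonneg hy01 (sub_nonneg.2 i1),
          mul_pos hp2 (sub_pos.2 h), hsV]
    have hE1 : y 1 + a₃ * y 2 = a₁ * y 0 + y 2 := by rw [e0, e1]
    have hE2 : y 1 + a₃ * y 2 = y 0 + a₂ * y 1 := by rw [e0, e2]
    funext j
    fin_cases j
    · show y 0 = x 0
      simp only [hxdef, Matrix.cons_val_zero]
      rw [eq_div_iff hD.ne', hDdef]
      linear_combination (1 - a₂ - a₃) * hE1 + (a₃ - 2) * hE2 + (1 - a₂ + a₂*a₃) * hy1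
    · show y 1 = x 1
      simp only [hxdef, Matrix.cons_val_one, Matrix.head_cons, Matrix.cons_val_zero]
      rw [eq_div_iff hD.ne', hDdef]
      linear_combination (1 + a₃) * hE1 + (1 - a₁ - a₃) * hE2 + (1 - a₃ + a₁*a₃) * hy1
    · show y 2 = x 2
      simp only [hxdef, Matrix.cons_val_two, Matrix.tail_cons, Matrix.head_cons]
      rw [eq_div_iff hD.ne', hDdef]
      linear_combination (a₂ - 2) * hE1 + (1 + a₁) * hE2 + (1 - a₁ + a₁*a₂) * hy1
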